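/- arXiv:1801.02373 — 3 statements merged into one kernel-verified Lean document; each statement's English description precedes it below -/
import Mathlib

section
/- Let (u,B), (u',B') ∈ ℂ^g × ℍ_g with θ(u,B) ≠ 0 and θ(u',B') ≠ 0. The discrete Gaussian distributions with parameters (u,B) and (u',B') are equal (i.e., p(k;u,B) = p(k;u',B') for all k ∈ ℤ^g) if and only if there exist a symmetric integer matrix β ∈ Sym²(ℤ^g) and a ∈ ℤ^g such that u = u' + i((1/2)diag(β) + a) and B = B' − iβ, where diag(β) is the vector of diagonal entries of β. -/
open scoped BigOperators
open Matrix

noncomputable section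

variable {ι : Type*} [Fintype ι] [DecidableEq ι]

/-- Cast an integer vector to a complex vector. -/
def zc (n : ι → ℤ) : ι → ℂ := fun i => (n i : ℂ)

/-- A single term of the Riemann theta series, `e(-(1/2) nᵗBn + nᵗu)` with `e(x) = exp(2πx)`. -/
def thetaTerm (u : ι → ℂ) (B : Matrix ι ι ℂ) (n : ι → ℤ) : ℂ :=
  Complex.exp ((2 * (Real.pi : ℂ)) *
    (-(1/2) * dotProduct (zc n) (B.mulVec (zc n)) + dotProduct (zc n) u))

/-- The Riemann theta function `θ(u,B) = Σ_{n∈ℤ^g} e(-(1/2) nᵗBn + nᵗu)`. -/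
def theta (u : ι → ℂ) (B : Matrix ι ι ℂ) : ℂ := ∑' n : ι → ℤ, thetaTerm u B n

/-- Membership in the Siegel right half-space: symmetric with positive definite real part. -/
def SiegelH (B : Matrix ι ι ℂ) : Prop := B.IsSymm ∧ (B.map Complex.re).PosDef

/-- The (complex) discrete Gaussian mass function. -/
def dg (u : ι → ℂ) (B : Matrix ι ι ℂ) (n : ι → ℤ) : ℂ := thetaTerm u B n / theta u B

set_option linter.unusedSectionVars false

lemma zc_zero : zc (0 : ι → ℤ) = 0 := by funext i; simp [zc]

lemma zc_add (k k' : ι → ℤ) : zc (k + k') = zc k + zc k' := by funext i; simp [zc]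

lemma zc_single (j : ι) (m : ℤ) : zc (Pi.single j m) = Pi.single j (m : ℂ) := by
  funext i
  rcases eq_or_ne i j with rfl | h
  · simp [zc]
  · simp [zc, Pi.single_apply, h]

lemma thetaTerm_zero (u : ι → ℂ) (B : Matrix ι ι ℂ) : thetaTerm u B 0 = 1 := by
  simp [thetaTerm, zc_zero]

lemma quad_single (M : Matrix ι ι ℂ) (j : ι) (c : ℂ) :
    Pi.single j c ⬝ᵥ M.mulVec (Pi.single j c) = c * (M j j * c) := by
  rw [Matrix.mulVec_single, single_dotProduct]
  rfl

lemma quad_pair (M : Matrix ι ι ℂ) (j l : ι) :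
    (Pi.single j (1:ℂ) + Pi.single l 1) ⬝ᵥ M.mulVec (Pi.single j 1 + Pi.single l 1)
      = M j j + M j l + M l j + M l l := by
  simp only [Matrix.mulVec_add, add_dotProduct, dotProduct_add,
    Matrix.mulVec_single_one, single_dotProduct, Matrix.col_apply]
  ring

lemma sum_sym_zmod2 (f : ι → ι → ZMod 2) (hf : ∀ j l, f j l = f l j) :
    ∑ j, ∑ l, f j l = ∑ j, f j j := by
  classical
  have h1 : ∑ j, ∑ l, f j l = ∑ p ∈ Finset.univ ×ˢ Finset.univ, f p.1 p.2 := by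
    rw [Finset.sum_product]
  rw [h1, ← Finset.sum_filter_add_sum_filter_not (Finset.univ ×ˢ Finset.univ)
      (fun p => p.1 = p.2)]
  have hdiag : ∑ p ∈ (Finset.univ ×ˢ Finset.univ).filter (fun p => p.1 = p.2), f p.1 p.2
      = ∑ j, f j j := by
    rw [Finset.sum_filter, Finset.sum_product]
    simp
  have hoff : ∑ p ∈ (Finset.univ ×ˢ Finset.univ).filter (fun p => ¬ p.1 = p.2), f p.1 p.2
      = 0 := by
    apply Finset.sum_involution (fun p _ => Prod.swap p)
    · intro p hp
      have : f p.2 p.1 = f p.1 p.2 := hf p.2 p.1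
      simp only [Prod.swap]
      rw [this]
      exact CharTwo.add_self_eq_zero _
    · intro p hp _
      simp only [Finset.mem_filter] at hp
      intro hc
      apply hp.2
      have := congrArg Prod.fst hc
      simp [Prod.swap] at this
      exact this.symm
    · intro p hp
      simp only [Finset.mem_filter, Finset.mem_product] at hp ⊢
      exact ⟨⟨Finset.mem_univ _, Finset.mem_univ _⟩, fun hc => hp.2 hc.symm⟩
    · intro p hp
      simp
  rw [hdiag, hoff, add_zero]

lemma parity_lemma (β : Matrix ι ι ℤ) (hβ : β.IsSymm) (k : ι → ℤ) :
    ∃ m : ℤ, k ⬝ᵥ β.mulVec k + ∑ j, k j * β j j = 2 * m := by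
  have h2 : ((k ⬝ᵥ β.mulVec k + ∑ j, k j * β j j : ℤ) : ZMod 2) = 0 := by
    push_cast
    simp only [dotProduct, Matrix.mulVec, Finset.mul_sum]
    push_cast
    have hs : ∑ j, ∑ l, ((k j : ZMod 2) * ((β j l : ZMod 2) * (k l : ZMod 2)))
        = ∑ j, (k j : ZMod 2) * ((β j j : ZMod 2) * (k j : ZMod 2)) :=
      sum_sym_zmod2 _ (fun j l => by rw [hβ.apply j l]; ring)
    rw [hs, ← Finset.sum_add_distrib]
    apply Finset.sum_eq_zero
    intro j _
    have hself : ∀ a : ZMod 2, a * a = a := by decide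
    have : (k j : ZMod 2) * ((β j j : ZMod 2) * (k j : ZMod 2))
        = (k j : ZMod 2) * (β j j : ZMod 2) := by
      rw [show (k j : ZMod 2) * ((β j j : ZMod 2) * (k j : ZMod 2))
          = ((k j : ZMod 2) * (k j : ZMod 2)) * (β j j : ZMod 2) by ring, hself]
    rw [this]
    exact CharTwo.add_self_eq_zero _
  obtain ⟨m, hm⟩ := (ZMod.intCast_zmod_eq_zero_iff_dvd _ 2).mp h2
  exact ⟨m, hm⟩

lemma key_forward (C : Matrix ι ι ℂ) (hC : C.IsSymm) (v : ι → ℂ)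
    (N : (ι → ℤ) → ℤ)
    (hN : ∀ k : ι → ℤ, -(1/2) * (zc k ⬝ᵥ C.mulVec (zc k)) + zc k ⬝ᵥ v = (N k : ℂ) * Complex.I) :
    ∃ (β : Matrix ι ι ℤ) (a : ι → ℤ), β.IsSymm ∧
      (∀ j, v j = Complex.I * ((1/2) * (β j j : ℂ) + (a j : ℂ))) ∧
      (∀ j l, C j l = -(Complex.I * (β j l : ℂ))) := by
  classical
  set β : Matrix ι ι ℤ := Matrix.of fun j l =>
    if j = l then N (Pi.single j 2) - 2 * N (Pi.single j 1)
    else N (Pi.single j 1 + Pi.single l 1) - N (Pi.single j 1) - N (Pi.single l 1) with hβdef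
  have hβ : ∀ j l, β j l = if j = l then N (Pi.single j 2) - 2 * N (Pi.single j 1)
      else N (Pi.single j 1 + Pi.single l 1) - N (Pi.single j 1) - N (Pi.single l 1) :=
    fun j l => rfl
  have hsingle : ∀ j : ι, -(1/2) * ((1:ℂ) * (C j j * 1)) + 1 * v j
      = (N (Pi.single j 1) : ℂ) * Complex.I := by
    intro j
    have h := hN (Pi.single j 1)
    rw [zc_single] at h
    push_cast at h
    rwa [quad_single, single_dotProduct] at h
  have hdouble : ∀ j : ι, -(1/2) * ((2:ℂ) * (C j j * 2)) + 2 * v j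
      = (N (Pi.single j 2) : ℂ) * Complex.I := by
    intro j
    have h := hN (Pi.single j 2)
    rw [zc_single] at h
    push_cast at h
    rwa [quad_single, single_dotProduct] at h
  have hdiag : ∀ j : ι, C j j = -(Complex.I * (β j j : ℂ)) := by
    intro j
    rw [hβ, if_pos rfl]
    push_cast
    linear_combination (hsingle j) * 2 - hdouble j
  have hoffd : ∀ j l : ι, j ≠ l → C j l = -(Complex.I * (β j l : ℂ)) := by
    intro j l hjl
    have hp := hN (Pi.single j 1 + Pi.single l 1)
    rw [zc_add, zc_single, zc_single] at hp
    push_cast at hp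
    rw [quad_pair, add_dotProduct,
      single_dotProduct, single_dotProduct] at hp
    have hs : C l j = C j l := hC.apply j l
    rw [hβ, if_neg hjl]
    push_cast
    linear_combination hsingle j + hsingle l - hp - (1/2) * hs
  have hCβ : ∀ j l, C j l = -(Complex.I * (β j l : ℂ)) := by
    intro j l
    rcases eq_or_ne j l with rfl | h
    · exact hdiag j
    · exact hoffd j l h
  refine ⟨β, fun j => N (Pi.single j 1) - β j j, ?_, ?_, hCβ⟩
  · apply Matrix.IsSymm.ext
    intro j l
    rcases eq_or_ne j l with rfl | h
    · rfl
    · rw [hβ, hβ, if_neg h, if_neg (Ne.symm h), add_comm (Pi.single l 1)]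
      ring
  · intro j
    have h1 := hsingle j
    have h2 := hdiag j
    push_cast
    linear_combination h1 + (1/2) * h2

lemma cast_quad (β : Matrix ι ι ℤ) (k : ι → ℤ) :
    zc k ⬝ᵥ (β.map (Int.cast : ℤ → ℂ)).mulVec (zc k) = ((k ⬝ᵥ β.mulVec k : ℤ) : ℂ) := by
  simp only [dotProduct, Matrix.mulVec, Matrix.map_apply, zc]
  push_cast
  rfl

lemma thetaTerm_shift (u' : ι → ℂ) (B' : Matrix ι ι ℂ) (β : Matrix ι ι ℤ) (a : ι → ℤ)
    (hβ : β.IsSymm) (k : ι → ℤ) :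
    thetaTerm (u' + fun j => Complex.I * ((1/2) * (β j j : ℂ) + (a j : ℂ)))
      (B' - Complex.I • β.map (Int.cast : ℤ → ℂ)) k = thetaTerm u' B' k := by
  obtain ⟨m, hm⟩ := parity_lemma β hβ k
  unfold thetaTerm
  have hw : zc k ⬝ᵥ (fun j => Complex.I * ((1/2) * (β j j : ℂ) + (a j : ℂ)))
      = Complex.I * ((1/2) * ∑ j, (k j : ℂ) * (β j j : ℂ) + ∑ j, (k j : ℂ) * (a j : ℂ)) := by
    simp only [dotProduct, zc, mul_add, Finset.mul_sum, Finset.sum_add_distrib]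
    congr 1 <;> exact Finset.sum_congr rfl fun j _ => by ring
  have hm' := congrArg (fun z : ℤ => (z : ℂ)) hm
  push_cast at hm'
  have key : (2 * (Real.pi : ℂ)) *
        (-(1/2) * (zc k ⬝ᵥ (B' - Complex.I • β.map (Int.cast : ℤ → ℂ)).mulVec (zc k))
          + zc k ⬝ᵥ (u' + fun j => Complex.I * ((1/2) * (β j j : ℂ) + (a j : ℂ))))
      = (2 * (Real.pi : ℂ)) * (-(1/2) * (zc k ⬝ᵥ B'.mulVec (zc k)) + zc k ⬝ᵥ u')
        + ((m + ∑ j, k j * a j : ℤ) : ℂ) * (2 * (Real.pi : ℂ) * Complex.I) := by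
    rw [Matrix.sub_mulVec, dotProduct_sub, dotProduct_add,
      Matrix.smul_mulVec, dotProduct_smul, cast_quad, hw, smul_eq_mul]
    push_cast
    linear_combination (Real.pi : ℂ) * Complex.I * hm'
  rw [key, Complex.exp_add, Complex.exp_int_mul_two_pi_mul_I, mul_one]

/-- Equivalence of discrete Gaussians: two discrete Gaussians with parameters `(u,B)` and
`(u',B')` have the same distribution iff `u = u' + i((1/2)diag(β) + a)` and `B = B' - iβ`
for a symmetric integer matrix `β` and `a ∈ ℤ^g`. -/
theorem dg_equivalence (u u' : ι → ℂ) (B B' : Matrix ι ι ℂ)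
    (hB : SiegelH B) (hB' : SiegelH B')
    (hθ : theta u B ≠ 0) (hθ' : theta u' B' ≠ 0) :
    (∀ k : ι → ℤ, dg u B k = dg u' B' k) ↔
      ∃ (β : Matrix ι ι ℤ) (a : ι → ℤ), β.IsSymm ∧
        u = u' + (fun j => Complex.I * ((1/2) * (β j j : ℂ) + (a j : ℂ))) ∧
        B = B' - Complex.I • (β.map (Int.cast : ℤ → ℂ)) := by
  constructor
  · intro h
    have h0 := h 0
    rw [dg, dg, thetaTerm_zero, thetaTerm_zero] at h0
    have hθeq : theta u B = theta u' B' := by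
      rw [div_eq_div_iff hθ hθ', one_mul, one_mul] at h0
      exact h0.symm
    have hterm : ∀ k, thetaTerm u B k = thetaTerm u' B' k := by
      intro k
      have hk := h k
      rw [dg, dg, hθeq] at hk
      rw [div_eq_div_iff hθ' hθ'] at hk
      exact mul_right_cancel₀ hθ' hk
    have spec : ∀ k : ι → ℤ, ∃ n : ℤ,
        -(1/2) * (zc k ⬝ᵥ (B - B').mulVec (zc k)) + zc k ⬝ᵥ (u - u')
          = (n : ℂ) * Complex.I := by
      intro k
      have hk := hterm k
      rw [thetaTerm, thetaTerm, Complex.exp_eq_exp_iff_exists_int] at hk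
      obtain ⟨n, hn⟩ := hk
      refine ⟨n, ?_⟩
      have h2π : (2 * (Real.pi : ℂ)) ≠ 0 := by
        simp [Real.pi_ne_zero]
      rw [Matrix.sub_mulVec, dotProduct_sub, dotProduct_sub]
      refine mul_left_cancel₀ h2π ?_
      linear_combination hn
    choose N hN using spec
    obtain ⟨β, a, hβs, hva, hCβ⟩ := key_forward (B - B') (hB.1.sub hB'.1) (u - u') N hN
    refine ⟨β, a, hβs, ?_, ?_⟩
    · funext j
      have hj := hva j
      simp only [Pi.sub_apply] at hj
      simp only [Pi.add_apply]
      linear_combination hj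
    · ext j l
      have hjl := hCβ j l
      simp only [Matrix.sub_apply] at hjl ⊢
      simp only [Matrix.smul_apply, Matrix.map_apply, smul_eq_mul]
      linear_combination hjl
  · rintro ⟨β, a, hβs, hu, hBB⟩
    have hterm : ∀ k, thetaTerm u B k = thetaTerm u' B' k := by
      intro k
      rw [hu, hBB]
      exact thetaTerm_shift u' B' β a hβs k
    have hθeq : theta u B = theta u' B' := tsum_congr hterm
    intro k
    rw [dg, dg, hterm k, hθeq]
end
end

section
/- Let X = (X₁,X₂) be a discrete Gaussian on ℤ^{g₁} × ℤ^{g₂} with parameters u = (u₁,u₂) and block matrix B = [[B₁₁, B₁₂],[B₁₂ᵗ, B₂₂]]. Then the marginal distribution of X₁ satisfies ℙ(X₁ = n₁) = (θ(u₂ − B₁₂ᵗn₁, B₂₂)/θ(u,B)) · exp(2π(-(1/2)n₁ᵗB₁₁n₁ + n₁ᵗu₁)) for all n₁ ∈ ℤ^{g₁}. -/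
open scoped BigOperators
open Matrix

noncomputable section

variable {ι : Type*} [Fintype ι] [DecidableEq ι]

lemma zc_elim {ι₁ ι₂ : Type*} (n₁ : ι₁ → ℤ) (n₂ : ι₂ → ℤ) :
    zc (Sum.elim n₁ n₂) = Sum.elim (zc n₁) (zc n₂) := by
  funext i; cases i <;> rfl

lemma term_split {ι₁ ι₂ : Type*} [Fintype ι₁] [DecidableEq ι₁] [Fintype ι₂] [DecidableEq ι₂]
    (u₁ : ι₁ → ℂ) (u₂ : ι₂ → ℂ) (B₁₁ : Matrix ι₁ ι₁ ℂ) (B₁₂ : Matrix ι₁ ι₂ ℂ)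
    (B₂₂ : Matrix ι₂ ι₂ ℂ) (n₁ : ι₁ → ℤ) (n₂ : ι₂ → ℤ) :
    thetaTerm (Sum.elim u₁ u₂) (Matrix.fromBlocks B₁₁ B₁₂ B₁₂ᵀ B₂₂) (Sum.elim n₁ n₂) =
      thetaTerm (u₂ - B₁₂ᵀ.mulVec (zc n₁)) B₂₂ n₂ *
        Complex.exp ((2 * (Real.pi : ℂ)) *
          (-(1/2) * dotProduct (zc n₁) (B₁₁.mulVec (zc n₁)) + dotProduct (zc n₁) u₁)) := by
  unfold thetaTerm
  rw [← Complex.exp_add, ← mul_add]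
  congr 1
  have h : dotProduct (zc n₁) (B₁₂.mulVec (zc n₂)) = dotProduct (zc n₂) (B₁₂ᵀ.mulVec (zc n₁)) := by
    rw [dotProduct_mulVec, mulVec_transpose, dotProduct_comm]
  simp only [zc_elim, fromBlocks_mulVec, sumElim_dotProduct_sumElim, dotProduct_add,
    dotProduct_sub, Sum.elim_comp_inl, Sum.elim_comp_inr, h]
  ring

/-- Marginal of a joint discrete Gaussian: for `X = (X₁,X₂)` with block parameter
`B = [[B₁₁,B₁₂],[B₁₂ᵗ,B₂₂]]` and `u = (u₁,u₂)`,
`ℙ(X₁=n₁) = (θ(u₂ - B₁₂ᵗn₁, B₂₂)/θ(u,B)) · e(-(1/2)n₁ᵗB₁₁n₁ + n₁ᵗu₁)`. -/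
theorem dg_marginal {ι₁ ι₂ : Type*} [Fintype ι₁] [DecidableEq ι₁] [Fintype ι₂] [DecidableEq ι₂]
    (u₁ : ι₁ → ℂ) (u₂ : ι₂ → ℂ) (B₁₁ : Matrix ι₁ ι₁ ℂ) (B₁₂ : Matrix ι₁ ι₂ ℂ)
    (B₂₂ : Matrix ι₂ ι₂ ℂ)
    (hB : SiegelH (Matrix.fromBlocks B₁₁ B₁₂ B₁₂ᵀ B₂₂))
    (hθ : theta (Sum.elim u₁ u₂) (Matrix.fromBlocks B₁₁ B₁₂ B₁₂ᵀ B₂₂) ≠ 0)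
    (n₁ : ι₁ → ℤ) :
    ∑' n₂ : ι₂ → ℤ,
        dg (Sum.elim u₁ u₂) (Matrix.fromBlocks B₁₁ B₁₂ B₁₂ᵀ B₂₂) (Sum.elim n₁ n₂) =
      (theta (u₂ - B₁₂ᵀ.mulVec (zc n₁)) B₂₂ /
          theta (Sum.elim u₁ u₂) (Matrix.fromBlocks B₁₁ B₁₂ B₁₂ᵀ B₂₂)) *
        Complex.exp ((2 * (Real.pi : ℂ)) *
          (-(1/2) * dotProduct (zc n₁) (B₁₁.mulVec (zc n₁)) + dotProduct (zc n₁) u₁)) := by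
  simp only [dg, term_split, mul_div_assoc]
  rw [tsum_mul_right, ← theta]
  ring
end
end

section
/- Let (u,B) ∈ ℂ^g × ℍ_g with θ(u,B) ≠ 0. Then the mean of the discrete Gaussian X with parameters (u,B) is given coordinatewise by E[X_j] = (1/(2π)) · (∂θ/∂u_j)(u,B)/θ(u,B). -/
open scoped BigOperators
open Matrix

noncomputable section

variable {ι : Type*} [Fintype ι] [DecidableEq ι]

/-! ### Auxiliary summability lemmas -/

lemma summable_nat_aux {a b : ℝ} (ha : 0 < a) :
    Summable fun m : ℕ => Real.exp (-a * (m : ℝ) ^ 2 + b * |(m : ℝ)|) := by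
  apply summable_of_ratio_norm_eventually_le (r := Real.exp (-1)) (by
    rw [Real.exp_lt_one_iff]; norm_num)
  have : ∀ᶠ m : ℕ in Filter.atTop, a * (2 * m + 1) - b ≥ 1 := by
    rw [Filter.eventually_atTop]
    refine ⟨⌈(1 + b) / (2 * a)⌉₊, fun m hm => ?_⟩
    have h1 : (1 + b) / (2 * a) ≤ (m : ℝ) :=
      le_trans (Nat.le_ceil _) (Nat.cast_le.2 hm)
    have h2 : 1 + b ≤ 2 * a * m := by
      rwa [div_le_iff₀ (by positivity), mul_comm] at h1
    nlinarith
  filter_upwards [this] with m hm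
  rw [Real.norm_eq_abs, Real.norm_eq_abs, abs_of_pos (Real.exp_pos _),
    abs_of_pos (Real.exp_pos _), ← Real.exp_add]
  apply Real.exp_le_exp.2
  push_cast
  rw [abs_of_nonneg (by positivity : (0:ℝ) ≤ (m:ℝ) + 1), abs_of_nonneg (Nat.cast_nonneg m)]
  nlinarith [hm]

lemma summable_int_aux {a b : ℝ} (ha : 0 < a) :
    Summable fun m : ℤ => Real.exp (-a * (m : ℝ) ^ 2 + b * |(m : ℝ)|) := by
  apply Summable.of_nat_of_neg
  · exact summable_nat_aux ha
  · refine (summable_nat_aux (b := b) ha).congr fun m => ?_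
    push_cast
    rw [abs_neg, neg_pow]
    ring_nf

lemma summable_pi_prod_fin : ∀ (g : ℕ) (f : Fin g → ℤ → ℝ),
    (∀ i m, 0 ≤ f i m) → (∀ i, Summable (f i)) →
    Summable (fun n : Fin g → ℤ => ∏ i, f i (n i)) := by
  intro g
  induction g with
  | zero => intro f _ _; exact .of_finite
  | succ g IH =>
    intro f hpos hsum
    have h := (hsum 0).mul_of_nonneg
      (IH (fun a => f a.succ) (fun a m => hpos _ m) (fun a => hsum _))
      (fun m => hpos 0 m)
      (fun n => Finset.prod_nonneg fun a _ => hpos _ _)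
    have := (Fin.consEquiv (fun _ : Fin (g+1) => ℤ)).symm.summable_iff
      (f := fun p : ℤ × (Fin g → ℤ) => f 0 p.1 * ∏ a, f a.succ (p.2 a)) |>.2 h
    convert this using 1
    ext n
    simp [Fin.prod_univ_succ, Fin.consEquiv, Fin.tail]

lemma summable_pi_prod (f : ι → ℤ → ℝ)
    (hpos : ∀ i m, 0 ≤ f i m) (hsum : ∀ i, Summable (f i)) :
    Summable (fun n : ι → ℤ => ∏ i, f i (n i)) := by
  have e := Fintype.equivFin ι
  have h := summable_pi_prod_fin (Fintype.card ι) (fun a => f (e.symm a))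
    (fun a m => hpos _ m) (fun a => hsum _)
  refine ((Equiv.arrowCongr e.symm (Equiv.refl ℤ)).summable_iff
    (f := fun n : ι → ℤ => ∏ i, f i (n i))).1 ?_
  convert h using 1
  ext m
  show ∏ i, f i ((Equiv.arrowCongr e.symm (Equiv.refl ℤ)) m i) = _
  rw [← Equiv.prod_comp e.symm
    (fun i => f i ((Equiv.arrowCongr e.symm (Equiv.refl ℤ)) m i))]
  congr 1
  ext a
  simp [Equiv.arrowCongr]

lemma summable_master {a b : ℝ} (ha : 0 < a) :
    Summable fun n : ι → ℤ =>
      Real.exp (∑ i, (-a * ((n i : ℝ)) ^ 2 + b * |(n i : ℝ)|)) := by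
  have := summable_pi_prod (ι := ι) (fun _ m => Real.exp (-a * (m : ℝ) ^ 2 + b * |(m : ℝ)|))
    (fun _ m => (Real.exp_pos _).le) (fun _ => summable_int_aux ha)
  exact this.congr fun n => (Real.exp_sum _ _).symm

lemma posdef_quad_lower_bound {A : Matrix ι ι ℝ} (hA : A.PosDef) :
    ∃ c > 0, ∀ x : ι → ℝ, c * (∑ i, x i ^ 2) ≤ dotProduct x (A.mulVec x) := by
  rcases isEmpty_or_nonempty ι with h | h
  · refine ⟨1, one_pos, fun x => ?_⟩
    simp [dotProduct, Finset.univ_eq_empty]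
  have hquad : ∀ x : ι → ℝ, x ≠ 0 → 0 < dotProduct x (A.mulVec x) := by
    intro x hx
    simpa using hA.dotProduct_mulVec_pos hx
  set φ : EuclideanSpace ℝ ι → ℝ := fun x => dotProduct (x : ι → ℝ) (A.mulVec (x : ι → ℝ)) with hφ
  have hcont : Continuous φ := by
    have : Continuous fun x : ι → ℝ => dotProduct x (A.mulVec x) := by
      simp only [dotProduct, Matrix.mulVec]
      fun_prop
    exact this.comp (EuclideanSpace.equiv ι ℝ).continuous
  have hS : IsCompact (Metric.sphere (0 : EuclideanSpace ℝ ι) 1) := isCompact_sphere _ _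
  have hne : (Metric.sphere (0 : EuclideanSpace ℝ ι) 1).Nonempty :=
    NormedSpace.sphere_nonempty.2 zero_le_one
  obtain ⟨x₀, hx₀S, hmin⟩ := hS.exists_isMinOn hne hcont.continuousOn
  have hx₀norm : ‖x₀‖ = 1 := by simpa using hx₀S
  have hx₀ne : (x₀ : ι → ℝ) ≠ 0 := by
    intro hc
    have : x₀ = 0 := by simpa using congrArg (WithLp.toLp 2) hc
    rw [this] at hx₀norm
    simp at hx₀norm
  refine ⟨φ x₀, hquad _ hx₀ne, fun x => ?_⟩
  by_cases hx : x = 0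
  · simp [hx]
  let x' : EuclideanSpace ℝ ι := WithLp.toLp 2 x
  have hxn : ‖x'‖ ≠ 0 := by
    simp only [ne_eq, norm_eq_zero]
    intro hc
    exact hx (by simpa [x'] using congrArg WithLp.ofLp hc)
  set y : EuclideanSpace ℝ ι := ‖x'‖⁻¹ • x' with hy
  have hyS : y ∈ Metric.sphere (0 : EuclideanSpace ℝ ι) 1 := by
    simp only [Metric.mem_sphere, dist_zero_right, hy, norm_smul, norm_inv, norm_norm]
    exact inv_mul_cancel₀ hxn
  have hkey : φ x₀ ≤ φ y := hmin hyS
  have hsq : ‖x'‖ ^ 2 = ∑ i, x i ^ 2 := by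
    rw [EuclideanSpace.norm_eq, Real.sq_sqrt (by positivity)]
    refine Finset.sum_congr rfl fun i _ => ?_
    show ‖x i‖ ^ 2 = x i ^ 2
    rw [Real.norm_eq_abs, sq_abs]
  have hφy : φ y = (‖x'‖⁻¹) ^ 2 * dotProduct x (A.mulVec x) := by
    show dotProduct (‖x'‖⁻¹ • x) (A.mulVec (‖x'‖⁻¹ • x)) = _
    rw [Matrix.mulVec_smul, dotProduct_smul, smul_dotProduct]
    show ‖x'‖⁻¹ * (‖x'‖⁻¹ * dotProduct x (A.mulVec x)) = _
    ring
  have hnorm2pos : 0 < ‖x'‖ ^ 2 := by positivity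
  have h2 := mul_le_mul_of_nonneg_right hkey (le_of_lt hnorm2pos)
  rw [hφy] at h2
  have h3 : ‖x'‖⁻¹ ^ 2 * dotProduct x (A.mulVec x) * ‖x'‖ ^ 2 = dotProduct x (A.mulVec x) := by
    field_simp
  rw [h3] at h2
  rw [← hsq]
  linarith

/-! ### Structure of the theta terms -/

lemma dot_update (u : ι → ℂ) (j : ι) (t : ℂ) (n : ι → ℤ) :
    dotProduct (zc n) (Function.update u j t)
      = dotProduct (zc n) u + (n j : ℂ) * (t - u j) := by
  have h : Function.update u j t = u + Pi.single j (t - u j) := by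
    ext i
    by_cases h : i = j
    · subst h; simp
    · simp [Function.update_of_ne h, Pi.single_apply, h]
  rw [h, dotProduct_add, dotProduct_single]
  rfl

lemma thetaTerm_update (u : ι → ℂ) (B : Matrix ι ι ℂ) (j : ι) (t : ℂ) (n : ι → ℤ) :
    thetaTerm (Function.update u j t) B n
      = thetaTerm u B n * Complex.exp ((2 * (Real.pi : ℂ)) * (n j : ℂ) * (t - u j)) := by
  rw [thetaTerm, thetaTerm, ← Complex.exp_add, dot_update]
  ring_nf

lemma hasDerivAt_thetaTerm (u : ι → ℂ) (B : Matrix ι ι ℂ) (j : ι) (n : ι → ℤ) (t₀ : ℂ) :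
    HasDerivAt (fun t : ℂ => thetaTerm (Function.update u j t) B n)
      ((2 * (Real.pi : ℂ)) * (n j : ℂ) * thetaTerm (Function.update u j t₀) B n) t₀ := by
  have h1 : HasDerivAt (fun t : ℂ => (2 * (Real.pi : ℂ)) * (n j : ℂ) * (t - u j))
      ((2 * (Real.pi : ℂ)) * (n j : ℂ)) t₀ := by
    simpa using ((hasDerivAt_id t₀).sub_const (u j)).const_mul ((2 * (Real.pi : ℂ)) * (n j : ℂ))
  have h2 := (h1.cexp).const_mul (thetaTerm u B n)
  have heq : (fun t : ℂ => thetaTerm (Function.update u j t) B n)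
      = fun t => thetaTerm u B n * Complex.exp ((2 * (Real.pi : ℂ)) * (n j : ℂ) * (t - u j)) := by
    funext t; exact thetaTerm_update u B j t n
  rw [heq, thetaTerm_update]
  refine h2.congr_deriv ?_
  ring

/-! ### Norm estimates -/

lemma re_dot_mulVec (v : ι → ℝ) (B : Matrix ι ι ℂ) :
    (dotProduct (fun i => (v i : ℂ)) (B.mulVec (fun i => (v i : ℂ)))).re
      = dotProduct v ((B.map Complex.re).mulVec v) := by
  simp only [dotProduct, Matrix.mulVec, Matrix.map_apply, Complex.re_sum]
  refine Finset.sum_congr rfl fun i _ => ?_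
  simp only [Complex.mul_re, Complex.ofReal_re, Complex.ofReal_im, zero_mul, sub_zero,
    Complex.re_sum, Complex.im_sum, Finset.mul_sum, Complex.mul_im, mul_zero, add_zero]

lemma re_dot_vec (v : ι → ℝ) (w : ι → ℂ) :
    (dotProduct (fun i => (v i : ℂ)) w).re = ∑ i, v i * (w i).re := by
  simp only [dotProduct, Complex.re_sum]
  refine Finset.sum_congr rfl fun i _ => ?_
  simp [Complex.mul_re]

lemma zc_eq_ofReal (n : ι → ℤ) : zc n = fun i => ((n i : ℝ) : ℂ) := by
  funext i; simp [zc]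

lemma norm_thetaTerm (w : ι → ℂ) (B : Matrix ι ι ℂ) (n : ι → ℤ) :
    ‖thetaTerm w B n‖ = Real.exp (2 * Real.pi *
      (-(1/2) * dotProduct (fun i => (n i : ℝ)) ((B.map Complex.re).mulVec (fun i => (n i : ℝ)))
        + ∑ i, (n i : ℝ) * (w i).re)) := by
  rw [thetaTerm, Complex.norm_exp]
  congr 1
  rw [zc_eq_ofReal]
  have h2 : (2 * (Real.pi : ℂ)) = ((2 * Real.pi : ℝ) : ℂ) := by push_cast; ring
  rw [h2, Complex.re_ofReal_mul, Complex.add_re, re_dot_vec]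
  have hhalf : (-(1/2) : ℂ) = ((-(1/2) : ℝ) : ℂ) := by norm_num
  rw [hhalf, Complex.re_ofReal_mul, re_dot_mulVec]

/-- Mean of the discrete Gaussian: `E[X_j] = (1/(2π)) (∂θ/∂u_j)(u,B)/θ(u,B)`. -/
theorem dg_mean (u : ι → ℂ) (B : Matrix ι ι ℂ) (hB : SiegelH B)
    (hθ : theta u B ≠ 0) (j : ι) :
    ∑' n : ι → ℤ, (n j : ℂ) * dg u B n =
      (1 / (2 * (Real.pi : ℂ))) *
        deriv (fun t : ℂ => theta (Function.update u j t) B) (u j) / theta u B := by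
  obtain ⟨c, hc, hquad⟩ := posdef_quad_lower_bound hB.2
  set M : ℝ := (∑ i, ‖u i‖) + 1 with hM
  have hMu : ∀ i, ‖u i‖ ≤ M - 1 := by
    intro i
    rw [hM]
    simp only [add_sub_cancel_right]
    exact Finset.single_le_sum (fun i _ => norm_nonneg (u i)) (Finset.mem_univ i)
  have pi_pos := Real.pi_pos
  -- uniform bound for theta terms on the ball
  have hbound : ∀ t ∈ Metric.ball (u j) 1, ∀ n : ι → ℤ,
      ‖thetaTerm (Function.update u j t) B n‖
        ≤ Real.exp (∑ i, (-(Real.pi * c) * (n i : ℝ) ^ 2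
            + (2 * Real.pi * M) * |(n i : ℝ)|)) := by
    intro t ht n
    rw [norm_thetaTerm, Real.exp_le_exp]
    have hw : ∀ i, ‖Function.update u j t i‖ ≤ M := by
      intro i
      by_cases h : i = j
      · rw [h, Function.update_self]
        have h1 : ‖t - u j‖ ≤ 1 := (mem_ball_iff_norm.1 ht).le
        have h2 : ‖t‖ ≤ ‖u j‖ + ‖t - u j‖ := by
          calc ‖t‖ = ‖u j + (t - u j)‖ := by ring_nf
          _ ≤ ‖u j‖ + ‖t - u j‖ := norm_add_le _ _
        linarith [hMu j]
      · rw [Function.update_of_ne h]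
        linarith [hMu i]
    have h1 : c * (∑ i, ((n i : ℝ)) ^ 2)
        ≤ dotProduct (fun i => (n i : ℝ)) ((B.map Complex.re).mulVec fun i => (n i : ℝ)) :=
      hquad _
    have h2 : ∑ i, (n i : ℝ) * ((Function.update u j t) i).re
        ≤ (∑ i, |(n i : ℝ)|) * M := by
      rw [Finset.sum_mul]
      refine Finset.sum_le_sum fun i _ => ?_
      calc (n i : ℝ) * ((Function.update u j t) i).re
          ≤ |(n i : ℝ) * ((Function.update u j t) i).re| := le_abs_self _
        _ = |(n i : ℝ)| * |((Function.update u j t) i).re| := abs_mul _ _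
        _ ≤ |(n i : ℝ)| * M := by
            refine mul_le_mul_of_nonneg_left ?_ (abs_nonneg _)
            exact le_trans (Complex.abs_re_le_norm _) (hw i)
    have expand : ∑ i, (-(Real.pi * c) * (n i : ℝ) ^ 2 + (2 * Real.pi * M) * |(n i : ℝ)|)
        = -(Real.pi * c) * (∑ i, (n i : ℝ) ^ 2)
          + 2 * Real.pi * M * (∑ i, |(n i : ℝ)|) := by
      rw [Finset.sum_add_distrib, ← Finset.mul_sum, ← Finset.mul_sum]
    rw [expand]
    calc 2 * Real.pi *
          ((-(1/2) * dotProduct (fun i => (n i : ℝ))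
              ((B.map Complex.re).mulVec fun i => (n i : ℝ)))
            + ∑ i, (n i : ℝ) * ((Function.update u j t) i).re)
        = -(Real.pi * dotProduct (fun i => (n i : ℝ))
              ((B.map Complex.re).mulVec fun i => (n i : ℝ)))
            + 2 * Real.pi * (∑ i, (n i : ℝ) * ((Function.update u j t) i).re) := by ring
      _ ≤ -(Real.pi * (c * (∑ i, ((n i : ℝ)) ^ 2)))
            + 2 * Real.pi * ((∑ i, |(n i : ℝ)|) * M) :=
          add_le_add (neg_le_neg (mul_le_mul_of_nonneg_left h1 pi_pos.le))
            (mul_le_mul_of_nonneg_left h2 (by positivity))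
      _ = -(Real.pi * c) * (∑ i, (n i : ℝ) ^ 2)
            + 2 * Real.pi * M * (∑ i, |(n i : ℝ)|) := by ring
  -- the summable bound for the derivatives
  set v : (ι → ℤ) → ℝ := fun n => 2 * Real.pi *
      Real.exp (∑ i, (-(Real.pi * c) * (n i : ℝ) ^ 2
        + (2 * Real.pi * M + 1) * |(n i : ℝ)|)) with hv
  have hvsum : Summable v := (summable_master (by positivity)).mul_left _
  -- summability of the theta series at the center
  have hsum0 : Summable fun n : ι → ℤ => thetaTerm (Function.update u j (u j)) B n := by
    apply Summable.of_norm_bounded (summable_master (ι := ι)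
      (a := Real.pi * c) (b := 2 * Real.pi * M) (by positivity))
    exact hbound (u j) (Metric.mem_ball_self one_pos)
  -- bound for the derivative terms
  have hg'bound : ∀ (n : ι → ℤ), ∀ t ∈ Metric.ball (u j) 1,
      ‖(2 * (Real.pi : ℂ)) * (n j : ℂ) * thetaTerm (Function.update u j t) B n‖ ≤ v n := by
    intro n t ht
    rw [norm_mul, norm_mul]
    have e1 : ‖(2 * (Real.pi : ℂ))‖ = 2 * Real.pi := by
      rw [show (2 * (Real.pi : ℂ)) = ((2 * Real.pi : ℝ) : ℂ) by push_cast; ring,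
        Complex.norm_real, Real.norm_eq_abs, abs_of_pos (by positivity)]
    have e2 : ‖((n j : ℤ) : ℂ)‖ = |(n j : ℝ)| := by
      rw [show ((n j : ℤ) : ℂ) = (((n j : ℤ) : ℝ) : ℂ) by push_cast; ring,
        Complex.norm_real, Real.norm_eq_abs]
    rw [e1, e2]
    have h3 : |(n j : ℝ)| ≤ Real.exp (∑ i, |(n i : ℝ)|) := by
      have h4 : |(n j : ℝ)| ≤ ∑ i, |(n i : ℝ)| :=
        Finset.single_le_sum (f := fun i => |(n i : ℝ)|) (fun i _ => abs_nonneg _)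
          (Finset.mem_univ j)
      have h5 : (∑ i, |(n i : ℝ)|) ≤ Real.exp (∑ i, |(n i : ℝ)|) :=
        (Real.add_one_le_exp _).trans' (by linarith)
      linarith
    have h6 := hbound t ht n
    calc 2 * Real.pi * |(n j : ℝ)| * ‖thetaTerm (Function.update u j t) B n‖
        = 2 * Real.pi * (|(n j : ℝ)| * ‖thetaTerm (Function.update u j t) B n‖) := by ring
      _ ≤ 2 * Real.pi * (Real.exp (∑ i, |(n i : ℝ)|) *
            Real.exp (∑ i, (-(Real.pi * c) * (n i : ℝ) ^ 2
              + (2 * Real.pi * M) * |(n i : ℝ)|))) := by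
          refine mul_le_mul_of_nonneg_left ?_ (by positivity)
          exact mul_le_mul h3 h6 (norm_nonneg _) (Real.exp_pos _).le
      _ = v n := by
          rw [hv, ← Real.exp_add]
          congr 2
          rw [← Finset.sum_add_distrib]
          refine Finset.sum_congr rfl fun i _ => ?_
          ring
  -- differentiate the series term by term
  have hkey : HasDerivAt (fun t : ℂ => theta (Function.update u j t) B)
      (∑' n : ι → ℤ, (2 * (Real.pi : ℂ)) * (n j : ℂ) * thetaTerm u B n) (u j) := by
    have H := hasDerivAt_tsum_of_isPreconnected hvsum Metric.isOpen_ball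
      (convex_ball (u j) (1 : ℝ)).isPreconnected
      (fun n t ht => hasDerivAt_thetaTerm u B j n t)
      hg'bound (Metric.mem_ball_self one_pos) hsum0 (Metric.mem_ball_self one_pos)
    have hupd : Function.update u j (u j) = u := Function.update_eq_self j u
    simp only [hupd] at H
    exact H
  rw [hkey.deriv]
  have hπ : (2 * (Real.pi : ℂ)) ≠ 0 := by
    simp [Real.pi_ne_zero, Complex.ofReal_ne_zero]
  have hsplit : (fun n : ι → ℤ => (2 * (Real.pi : ℂ)) * (n j : ℂ) * thetaTerm u B n)
      = fun n : ι → ℤ => (2 * (Real.pi : ℂ)) * ((n j : ℂ) * thetaTerm u B n) := by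
    funext n; ring
  rw [hsplit, tsum_mul_left]
  have hLHS : ∑' n : ι → ℤ, (n j : ℂ) * dg u B n
      = (∑' n : ι → ℤ, (n j : ℂ) * thetaTerm u B n) / theta u B := by
    rw [← tsum_div_const]
    refine tsum_congr fun n => ?_
    rw [dg, mul_div_assoc]
  rw [hLHS]
  field_simp
end
end
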